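/- Let H be a topological group and A a commensurated subgroup of H. Then the topological closure of A is also a commensurated subgroup of H. -/

import Mathlib

open Pointwise

def conjS {G : Type*} [Group G] (g : G) (H : Subgroup G) : Subgroup G :=
  H.map (MulAut.conj g).toMonoidHom

/-- `A` is commensurated: for every `x`, `A ∩ xAx⁻¹` has finite index in `A`. -/
def Commensurated {G : Type*} [Group G] (A : Subgroup G) : Prop :=
  ∀ x : G, (A ⊓ conjS x A).relIndex A ≠ 0

theorem stmt_1 {H : Type*} [Group H] [TopologicalSpace H] [IsTopologicalGroup H]
    (A : Subgroup H) (hA : Commensurated A) :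
    Commensurated A.topologicalClosure := by
  intro x
  set K : Subgroup H := A ⊓ conjS x A with hK
  have hrel : K.relIndex A ≠ 0 := hA x
  set Kc : Subgroup H := K.topologicalClosure with hKc
  set Ac : Subgroup H := A.topologicalClosure with hAc
  -- conjugation is a homeomorphism
  let e : Homeomorph H H := (Homeomorph.mulLeft x).trans (Homeomorph.mulRight x⁻¹)
  have hconj_set : ∀ (B : Subgroup H), (conjS x B : Set H) = e '' B := by
    intro B
    ext y
    simp [conjS, e, Subgroup.mem_map, Homeomorph.trans_apply]
  have hclosed_conj : IsClosed (conjS x Ac : Set H) := by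
    rw [hconj_set]
    exact e.isClosedMap _ A.isClosed_topologicalClosure
  -- Kc ≤ Ac ⊓ conjS x Ac
  have hKcle : Kc ≤ Ac ⊓ conjS x Ac := by
    apply le_inf
    · exact Subgroup.topologicalClosure_minimal _
        (le_trans inf_le_left A.le_topologicalClosure) A.isClosed_topologicalClosure
    · refine Subgroup.topologicalClosure_minimal _ ?_ hclosed_conj
      refine le_trans inf_le_right ?_
      exact Subgroup.map_mono A.le_topologicalClosure
  -- finite quotient
  have hfi : (K.subgroupOf A).FiniteIndex := ⟨hrel⟩
  have hfin : Finite (A ⧸ K.subgroupOf A) := (K.subgroupOf A).finite_quotient_of_finiteIndex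
  set Q := A ⧸ K.subgroupOf A
  -- A is covered by cosets of K indexed by Q
  have hcover : (A : Set H) ⊆ ⋃ q : Q, ((q.out : A) : H) • (K : Set H) := by
    intro a ha
    refine Set.mem_iUnion.2 ⟨QuotientGroup.mk (⟨a, ha⟩ : A), ?_⟩
    rw [mem_leftCoset_iff]
    have h1 : ((QuotientGroup.mk (⟨a, ha⟩ : A) : Q).out)⁻¹ * ⟨a, ha⟩ ∈ K.subgroupOf A := by
      rw [← QuotientGroup.eq]
      exact QuotientGroup.out_eq' _
    exact h1
  -- hence closure A is covered by cosets of Kc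
  have hcover2 : (Ac : Set H) ⊆ ⋃ q : Q, ((q.out : A) : H) • (Kc : Set H) := by
    have h1 : (Ac : Set H) = closure (A : Set H) := Subgroup.topologicalClosure_coe
    rw [h1]
    calc closure (A : Set H)
        ⊆ closure (⋃ q : Q, ((q.out : A) : H) • (K : Set H)) := closure_mono hcover
      _ = ⋃ q : Q, closure (((q.out : A) : H) • (K : Set H)) := closure_iUnion_of_finite _
      _ = ⋃ q : Q, ((q.out : A) : H) • closure (K : Set H) := by
          simp_rw [closure_smul]
      _ = ⋃ q : Q, ((q.out : A) : H) • (Kc : Set H) := by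
          rw [hKc]; simp_rw [Subgroup.topologicalClosure_coe]
  -- finite index of Kc.subgroupOf Ac
  have := Fintype.ofFinite Q
  have hAQ : ∀ q : Q, ((q.out : A) : H) ∈ Ac := fun q => A.le_topologicalClosure (q.out : A).2
  have hcov3 : ⋃ q ∈ (Finset.univ : Finset Q),
      (⟨((q.out : A) : H), hAQ q⟩ : Ac) • ((Kc.subgroupOf Ac : Subgroup Ac) : Set Ac)
        = Set.univ := by
    ext a
    simp only [Set.mem_univ, iff_true, Finset.mem_univ, Set.mem_iUnion, exists_prop, true_and]
    obtain ⟨q, hq⟩ := Set.mem_iUnion.1 (hcover2 a.2)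
    refine ⟨q, ?_⟩
    rw [mem_leftCoset_iff] at hq ⊢
    simpa [Subgroup.mem_subgroupOf] using hq
  have hfi2 : (Kc.subgroupOf Ac).FiniteIndex :=
    Subgroup.finiteIndex_of_leftCoset_cover_const hcov3
  have hKcrel : Kc.relIndex Ac ≠ 0 := hfi2.index_ne_zero
  -- conclude via divisibility
  intro hzero
  exact hKcrel (Nat.eq_zero_of_zero_dvd (hzero ▸ Subgroup.relIndex_dvd_of_le_left Ac hKcle))
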